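/- Let $E$ be a Banach space and $A$ the generator of a strongly continuous semigroup on $E$. Define $E_{-1} := (E \times E)/\mathscr{G}(A)$, where $\mathscr{G}(A) = \{(x, Ax) : x \in \mathsf{D}(A)\}$ is the graph of $A$, and let $i_{-1} : E \to E_{-1}$ be given by $i_{-1}x := (0,x) + \mathscr{G}(A)$. Then $i_{-1}$ is injective with dense range. -/

import Mathlib

/-- The canonical map `i₋₁ : E → E₋₁ = (E × E)/𝒢(A)`, `i₋₁ x = (0,x) + 𝒢(A)`, is
injective with dense range, when `A` is a closed densely defined operator. -/
theorem stmt_8 {E : Type*} [NormedAddCommGroup E] [NormedSpace ℝ E] [CompleteSpace E]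
    (D : Submodule ℝ E) (hD : Dense (D : Set E)) (A : D →ₗ[ℝ] E)
    (G : Submodule ℝ (E × E)) (hG : G = LinearMap.range (D.subtype.prod A))
    (hclosed : IsClosed (G : Set (E × E)))
    (iminus : E → (E × E) ⧸ G) (hi : ∀ x, iminus x = Submodule.Quotient.mk (0, x)) :
    Function.Injective iminus ∧ DenseRange iminus := by
  constructor
  · intro x y hxy
    rw [hi, hi, Submodule.Quotient.eq] at hxy
    have hmem : ((0 : E), x - y) ∈ G := by simpa [Prod.ext_iff] using hxy
    rw [hG] at hmem
    obtain ⟨d, hd⟩ := hmem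
    simp only [LinearMap.prod_apply, Function.prod, Prod.ext_iff, Submodule.coe_subtype] at hd
    have hd0 : d = 0 := Subtype.ext hd.1
    have hxy0 : x - y = 0 := by rw [← hd.2, hd0, map_zero]
    exact sub_eq_zero.mp hxy0
  · rw [Metric.denseRange_iff]
    intro q ε hε
    obtain ⟨⟨a, b⟩, rfl⟩ := q.exists_rep
    obtain ⟨d, hdD, hdist⟩ := Metric.mem_closure_iff.mp (hD a) ε hε
    set dd : D := ⟨d, hdD⟩
    refine ⟨b - A dd, ?_⟩
    rw [hi]
    have hGmem : ((d : E), A dd) ∈ G := by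
      rw [hG]; exact ⟨dd, rfl⟩
    have heq : (Submodule.Quotient.mk (a, b) : (E × E) ⧸ G) -
        Submodule.Quotient.mk (0, b - A dd) = Submodule.Quotient.mk (a - d, 0) := by
      rw [← Submodule.Quotient.mk_sub, Submodule.Quotient.eq]
      convert hGmem using 2 <;> simp [Prod.ext_iff]
    calc dist (Submodule.Quotient.mk (a, b) : (E × E) ⧸ G)
          (Submodule.Quotient.mk (0, b - A dd))
        = ‖(Submodule.Quotient.mk (a, b) : (E × E) ⧸ G) -
            Submodule.Quotient.mk (0, b - A dd)‖ := dist_eq_norm _ _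
      _ = ‖(Submodule.Quotient.mk (a - d, 0) : (E × E) ⧸ G)‖ := by rw [heq]
      _ ≤ ‖((a - d, 0) : E × E)‖ := Submodule.Quotient.norm_mk_le _ _
      _ < ε := by
          rw [Prod.norm_def]
          simpa [dist_eq_norm] using hdist
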